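/- Let H be a Hilbert space and G a subgroup of the unitary group U(H). For every ξ ∈ H, the orthogonal projection of ξ onto the subspace of G-invariant vectors equals the unique vector of minimal norm in the closed convex hull of the orbit G·ξ. In particular, this projection lies in the closed linear span of G·ξ. -/

import Mathlib

open scoped ComplexInnerProductSpace

variable {H : Type*} [NormedAddCommGroup H] [InnerProductSpace ℂ H]

/-- The closed subspace of vectors invariant under every element of a subgroup `G`
of the unitary group of `H`. -/
def invariantVectors (G : Subgroup (H ≃ₗᵢ[ℂ] H)) : Submodule ℂ H where
  carrier := {ξ : H | ∀ T ∈ G, T ξ = ξ}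
  zero_mem' := by intro T _; exact map_zero T
  add_mem' := by
    intro x y hx hy T hT
    rw [map_add, hx T hT, hy T hT]
  smul_mem' := by
    intro c x hx T hT
    rw [map_smul, hx T hT]

set_option maxHeartbeats 2000000 in
/-- **Alaoglu–Birkhoff.** For a subgroup `G` of the unitary group of a Hilbert space `H`
and `ξ ∈ H`, the orthogonal projection of `ξ` onto the subspace of `G`-invariant vectors
is the unique vector of minimal norm in the closed convex hull of the orbit `G·ξ`;
in particular it lies in the closed linear span of the orbit. -/
theorem stmt_2 [CompleteSpace H] (G : Subgroup (H ≃ₗᵢ[ℂ] H))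
    [CompleteSpace ↥(invariantVectors G)] (ξ : H) :
    (Submodule.orthogonalProjectionOnto (invariantVectors G) ξ : H) ∈
        closure (convexHull ℝ (Set.range fun T : G => (T : H ≃ₗᵢ[ℂ] H) ξ)) ∧
    (∀ y ∈ closure (convexHull ℝ (Set.range fun T : G => (T : H ≃ₗᵢ[ℂ] H) ξ)),
        ‖(Submodule.orthogonalProjectionOnto (invariantVectors G) ξ : H)‖ ≤ ‖y‖) ∧
    (∀ y ∈ closure (convexHull ℝ (Set.range fun T : G => (T : H ≃ₗᵢ[ℂ] H) ξ)),
        ‖y‖ = ‖(Submodule.orthogonalProjectionOnto (invariantVectors G) ξ : H)‖ →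
          y = (Submodule.orthogonalProjectionOnto (invariantVectors G) ξ : H)) ∧
    (Submodule.orthogonalProjectionOnto (invariantVectors G) ξ : H) ∈
        closure ((Submodule.span ℂ (Set.range fun T : G => (T : H ≃ₗᵢ[ℂ] H) ξ) : Submodule ℂ H) :
          Set H) := by
  classical
  letI : InnerProductSpace ℝ H := InnerProductSpace.complexToReal
  set s : Set H := Set.range fun T : G => (T : H ≃ₗᵢ[ℂ] H) ξ with hs
  set K : Set H := closure (convexHull ℝ s) with hK
  have hξs : ξ ∈ s := ⟨(1 : G), by simp⟩
  have hξK : ξ ∈ K := subset_closure (subset_convexHull ℝ s hξs)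
  have hKconv : Convex ℝ K := (convex_convexHull ℝ s).closure
  have hKclosed : IsClosed K := isClosed_closure
  -- K is invariant under every T ∈ G
  have hTK : ∀ T : G, ∀ y ∈ K, (T : H ≃ₗᵢ[ℂ] H) y ∈ K := by
    intro T y hy
    set f : H →ₗ[ℝ] H := ((T : H ≃ₗᵢ[ℂ] H).toLinearEquiv.toLinearMap.restrictScalars ℝ) with hf
    have hfc : Continuous f := (T : H ≃ₗᵢ[ℂ] H).continuous
    have hpre : K ⊆ f ⁻¹' K := by
      apply closure_minimal ?_ (hKclosed.preimage hfc)
      apply convexHull_min ?_ (hKconv.linear_preimage f)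
      rintro x ⟨S, rfl⟩
      exact subset_closure (subset_convexHull ℝ s ⟨T * S, rfl⟩)
    exact hpre hy
  -- minimal norm vector
  obtain ⟨m, hmK, hm⟩ := exists_norm_eq_iInf_of_complete_convex ⟨ξ, hξK⟩
    (hKclosed.isComplete) hKconv 0
  have hmin : ∀ y ∈ K, ‖m‖ ≤ ‖y‖ := by
    intro y hy
    have h1 : (⨅ w : K, ‖(0 : H) - w‖) ≤ ‖(0 : H) - y‖ :=
      ciInf_le ⟨0, by rintro r ⟨w, rfl⟩; positivity⟩ (⟨y, hy⟩ : K)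
    simpa using hm.le.trans h1
  -- m is G-invariant
  have hmInv : m ∈ invariantVectors G := by
    intro T hT
    have hTm : T m ∈ K := hTK ⟨T, hT⟩ m hmK
    have hnm : ‖T m‖ = ‖m‖ := T.norm_map m
    have hmid : (1/2 : ℝ) • m + (1/2 : ℝ) • T m ∈ K :=
      hKconv hmK hTm (by norm_num) (by norm_num) (by norm_num)
    have h1 : ‖m‖ ≤ ‖(1/2 : ℝ) • m + (1/2 : ℝ) • T m‖ := hmin _ hmid
    have hpar := parallelogram_law_with_norm ℂ m (T m)
    have h2 : ‖(1/2 : ℝ) • m + (1/2 : ℝ) • T m‖ = (1/2 : ℝ) * ‖m + T m‖ := by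
      rw [← smul_add, norm_smul]
      simp
    have h4 : ‖m‖ * ‖m‖ ≤ ((1/2 : ℝ) * ‖m + T m‖) * ((1/2 : ℝ) * ‖m + T m‖) := by
      have := h1.trans_eq h2
      exact mul_self_le_mul_self (norm_nonneg m) (by linarith)
    rw [hnm] at hpar
    have h3 : ‖m - T m‖ * ‖m - T m‖ ≤ 0 := by nlinarith [hpar, h4]
    have h5 : m - T m = 0 := by
      rw [← norm_eq_zero]
      exact le_antisymm (by nlinarith [mul_self_nonneg ‖m - T m‖, norm_nonneg (m - T m), h3]) (norm_nonneg _)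
    exact (sub_eq_zero.mp h5).symm
  -- invariant vectors have constant inner product on K
  have hinner : ∀ v ∈ invariantVectors G, ∀ y ∈ K, ⟪v, y⟫ = ⟪v, ξ⟫ := by
    intro v hv
    have hsub : K ⊆ {y : H | ⟪v, y⟫ = ⟪v, ξ⟫} := by
      apply closure_minimal ?_ (isClosed_eq (continuous_const.inner continuous_id) continuous_const)
      apply convexHull_min
      · rintro x ⟨T, rfl⟩
        have h1 : (T : H ≃ₗᵢ[ℂ] H) v = v := hv _ T.2
        show ⟪v, (T : H ≃ₗᵢ[ℂ] H) ξ⟫ = ⟪v, ξ⟫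
        conv_lhs => rw [← h1]
        exact LinearIsometryEquiv.inner_map_map _ _ _
      · intro x hx y hy a b _ _ hab
        simp only [Set.mem_setOf_eq, id_eq] at hx hy ⊢
        have ha : (a : ℝ) • x = (a : ℂ) • x := (RCLike.real_smul_eq_coe_smul (K := ℂ) a x)
        have hb : (b : ℝ) • y = (b : ℂ) • y := (RCLike.real_smul_eq_coe_smul (K := ℂ) b y)
        rw [ha, hb, inner_add_right, inner_smul_right, inner_smul_right, hx, hy,
          ← add_mul]
        norm_cast
        rw [hab]
        simp
    intro y hy
    exact hsub hy
  -- m is the orthogonal projection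
  have hP : (Submodule.orthogonalProjectionOnto (invariantVectors G) ξ : H) = m := by
    apply Submodule.eq_starProjection_of_mem_of_inner_eq_zero hmInv
    intro w hw
    have h1 : ⟪w, m⟫ = ⟪w, ξ⟫ := hinner w hw m hmK
    have : ⟪w, ξ - m⟫ = 0 := by rw [inner_sub_right, h1, sub_self]
    have h2 : ⟪ξ - m, w⟫ = 0 := by
      rw [← inner_conj_symm, this, map_zero]
    exact h2
  have hmm : ⟪m, m⟫ = ⟪m, ξ⟫ := hinner m hmInv m hmK
  rw [hP]
  refine ⟨hmK, hmin, ?_, ?_⟩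
  · -- uniqueness
    intro y hy hny
    have h1 : ⟪m, y⟫ = ⟪m, m⟫ := by rw [hinner m hmInv y hy, hmm]
    have h2 := norm_sub_sq (𝕜 := ℂ) y m
    have h3 : RCLike.re (⟪y, m⟫) = ‖m‖ ^ 2 := by
      rw [← inner_conj_symm, h1]
      simp [inner_self_eq_norm_sq]
      rw [← Complex.ofReal_pow, Complex.ofReal_re]
    have h4 : ‖y - m‖ ^ 2 = 0 := by rw [h2, h3, hny]; ring
    have := pow_eq_zero_iff (n := 2) (by norm_num) |>.mp h4
    exact sub_eq_zero.mp (by simpa using this)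
  · -- span
    have h1 : K ⊆ closure ((Submodule.span ℂ s : Submodule ℂ H) : Set H) := by
      apply closure_mono
      apply convexHull_min Submodule.subset_span
      intro x hx y hy a b _ _ _
      have ha : (a : ℝ) • x = (a : ℂ) • x := (RCLike.real_smul_eq_coe_smul (K := ℂ) a x)
      have hb : (b : ℝ) • y = (b : ℂ) • y := (RCLike.real_smul_eq_coe_smul (K := ℂ) b y)
      rw [ha, hb]
      exact Submodule.add_mem _ (Submodule.smul_mem _ _ hx) (Submodule.smul_mem _ _ hy)
    exact h1 hmK
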